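/- arXiv:2505.12179 — 6 statements merged into one kernel-verified Lean document; each statement's English description precedes it below -/
import Mathlib

section
/- For a nonzero symmetric traceless 3×3 real matrix Q with eigenvalues λ₁, λ₂, λ₃, the biaxiality parameter β(Q) = √6 · tr(Q³)/|Q|³ satisfies -1 ≤ β(Q) ≤ 1. -/
open Matrix

lemma trace_pow_eq_sum_eigenvalues_pow {n : ℕ} {A : Matrix (Fin n) (Fin n) ℝ}
    (hA : A.IsHermitian) (k : ℕ) :
    (A ^ k).trace = ∑ i, (hA.eigenvalues i) ^ k := by
  set U : Matrix (Fin n) (Fin n) ℝ := (hA.eigenvectorUnitary : Matrix (Fin n) (Fin n) ℝ)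
  set D : Matrix (Fin n) (Fin n) ℝ := diagonal (RCLike.ofReal ∘ hA.eigenvalues)
  have hU : star U * U = 1 := (Matrix.mem_unitaryGroup_iff').mp hA.eigenvectorUnitary.2
  have hspec : A = U * D * star U := hA.spectral_theorem
  have hpow : A ^ k = U * D ^ k * star U := by
    have hU' : U * star U = 1 := (Matrix.mem_unitaryGroup_iff).mp hA.eigenvectorUnitary.2
    induction k with
    | zero =>
      simp only [pow_zero, mul_one, hU']
    | succ m ih =>
      rw [pow_succ, ih, hspec]
      simp only [mul_assoc]
      rw [← mul_assoc (star U) U, hU, one_mul, pow_succ]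
      simp only [mul_assoc]
  rw [hpow, trace_mul_cycle, hU, one_mul]
  have : D ^ k = diagonal (fun i => (hA.eigenvalues i) ^ k) := by
    rw [diagonal_pow]
    congr 1
  rw [this, trace_diagonal]

/-- The biaxiality parameter β(Q) = √6 tr(Q³)/|Q|³ of a nonzero symmetric traceless
3×3 real matrix lies in [-1, 1]. -/
theorem biaxiality_bounds (Q : Matrix (Fin 3) (Fin 3) ℝ)
    (hsym : Q.IsSymm) (htr : Q.trace = 0) (hne : Q ≠ 0) :
    -1 ≤ Real.sqrt 6 * (Q * Q * Q).trace / (Real.sqrt (∑ i, ∑ j, (Q i j) ^ 2)) ^ 3 ∧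
      Real.sqrt 6 * (Q * Q * Q).trace / (Real.sqrt (∑ i, ∑ j, (Q i j) ^ 2)) ^ 3 ≤ 1 := by
  have hH : Q.IsHermitian := by
    rwa [Matrix.IsHermitian, Matrix.conjTranspose_eq_transpose_of_trivial]
  set l := hH.eigenvalues with hl
  -- sum of eigenvalues is zero
  have hsum1 : l 0 + l 1 + l 2 = 0 := by
    have h1 := trace_pow_eq_sum_eigenvalues_pow hH 1
    simp only [pow_one, Fin.sum_univ_three] at h1
    rw [← hl] at h1
    rw [← h1]; exact htr
  -- Frobenius norm squared equals trace Q²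
  have hS : (∑ i, ∑ j, (Q i j) ^ 2) = l 0 ^ 2 + l 1 ^ 2 + l 2 ^ 2 := by
    have h2 := trace_pow_eq_sum_eigenvalues_pow hH 2
    simp only [Fin.sum_univ_three] at h2
    rw [← hl] at h2
    rw [← h2, pow_two, Matrix.trace]
    simp only [Matrix.diag, Matrix.mul_apply]
    rw [Finset.sum_comm]
    apply Finset.sum_congr rfl; intro i _
    apply Finset.sum_congr rfl; intro j _
    have hs : Q j i = Q i j := by
      have := hsym
      rw [Matrix.IsSymm] at this
      calc Q j i = Qᵀ i j := rfl
        _ = Q i j := by rw [this]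
    rw [hs]; ring
  have hT : (Q * Q * Q).trace = l 0 ^ 3 + l 1 ^ 3 + l 2 ^ 3 := by
    have h3 := trace_pow_eq_sum_eigenvalues_pow hH 3
    simp only [Fin.sum_univ_three] at h3
    rw [← hl] at h3
    rw [← h3, pow_succ, pow_two]
  set S := l 0 ^ 2 + l 1 ^ 2 + l 2 ^ 2 with hSdef
  set T := l 0 ^ 3 + l 1 ^ 3 + l 2 ^ 3 with hTdef
  -- S > 0
  have hSpos : 0 < S := by
    rcases lt_or_eq_of_le (by positivity : (0:ℝ) ≤ S) with h | h
    · exact h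
    · exfalso
      have h0 : l 0 = 0 ∧ l 1 = 0 ∧ l 2 = 0 := by
        constructor; · nlinarith [sq_nonneg (l 1), sq_nonneg (l 2), sq_nonneg (l 0)]
        constructor; · nlinarith [sq_nonneg (l 1), sq_nonneg (l 2), sq_nonneg (l 0)]
        · nlinarith [sq_nonneg (l 1), sq_nonneg (l 2), sq_nonneg (l 0)]
      apply hne
      have hspec := hH.spectral_theorem
      have hz : (RCLike.ofReal ∘ hH.eigenvalues : Fin 3 → ℝ) = 0 := by
        funext i
        fin_cases i
        · simpa using h0.1
        · simpa using h0.2.1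
        · simpa using h0.2.2
      have hd : (diagonal (0 : Fin 3 → ℝ) : Matrix (Fin 3) (Fin 3) ℝ) = 0 := diagonal_zero
      rw [hz, hd, map_zero] at hspec
      exact hspec
  -- key inequality
  have hkey : 6 * T ^ 2 ≤ S ^ 3 := by
    have hc : l 2 = -(l 0 + l 1) := by linarith
    rw [hTdef, hSdef, hc]
    nlinarith [sq_nonneg ((l 0 - l 1) * (2 * l 0 + l 1) * (l 0 + 2 * l 1)),
      sq_nonneg (l 0 - l 1), sq_nonneg (l 0 + l 1)]
  -- denominator
  have hden : (Real.sqrt S) ^ 3 > 0 := by positivity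
  have hdensq : ((Real.sqrt S) ^ 3) ^ 2 = S ^ 3 := by
    rw [← pow_mul, mul_comm, pow_mul, Real.sq_sqrt hSpos.le]
  have hnum : |Real.sqrt 6 * T| ≤ (Real.sqrt S) ^ 3 := by
    have h1 : (Real.sqrt 6 * T) ^ 2 ≤ ((Real.sqrt S) ^ 3) ^ 2 := by
      rw [hdensq, mul_pow, Real.sq_sqrt (by norm_num : (6:ℝ) ≥ 0)]
      exact hkey
    calc |Real.sqrt 6 * T| = Real.sqrt ((Real.sqrt 6 * T) ^ 2) := by
          rw [Real.sqrt_sq_eq_abs]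
      _ ≤ Real.sqrt (((Real.sqrt S) ^ 3) ^ 2) := Real.sqrt_le_sqrt h1
      _ = (Real.sqrt S) ^ 3 := by rw [Real.sqrt_sq hden.le]
  rw [hT, hS]
  rw [← abs_le, abs_div, abs_of_pos hden, div_le_one hden]
  exact hnum
end

section
/- For a nonzero symmetric traceless 3×3 real matrix Q, β(Q) = 1 if and only if Q has two equal negative eigenvalues and one positive eigenvalue, i.e., Q/|Q| has eigenvalues √6/3, -√6/6, -√6/6. -/
open Matrix

lemma uniax_helper (x y s r : ℝ) (hr : r ^ 2 = 6) (hrpos : 0 < r) (hpos : 0 < s)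
    (hs : s ^ 2 = 6 * x ^ 2) (h : r * (3 * (x * x * y)) = s ^ 3) (hy : y = -2 * x) :
    x = -(s * (r / 6)) ∧ y = s * (r / 3) := by
  subst hy
  have hs3 : (0:ℝ) < s ^ 3 := by positivity
  have hxneg : x < 0 := by
    by_contra hx; push_neg at hx
    nlinarith [mul_nonneg hrpos.le (pow_nonneg hx 3)]
  have hfac2 : (s + r * x) * (s - r * x) = 0 := by linear_combination hs - x ^ 2 * hr
  have hsrx : s + r * x = 0 := by
    rcases mul_eq_zero.mp hfac2 with h1 | h2
    · exact h1
    · exfalso; nlinarith [mul_neg_of_pos_of_neg hrpos hxneg]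
  constructor
  · linear_combination (r / 6) * hsrx - (x / 6) * hr
  · linear_combination (-(r / 3)) * hsrx + (x / 3) * hr

lemma key_alg (a b c s : ℝ) (h0 : a + b + c = 0) (hs : s ^ 2 = a ^ 2 + b ^ 2 + c ^ 2)
    (hpos : 0 < s) :
    Real.sqrt 6 * (a ^ 3 + b ^ 3 + c ^ 3) / s ^ 3 = 1 ↔
      ((a = s * (Real.sqrt 6 / 3) ∧ b = -(s * (Real.sqrt 6 / 6)) ∧ c = -(s * (Real.sqrt 6 / 6))) ∨
       (b = s * (Real.sqrt 6 / 3) ∧ a = -(s * (Real.sqrt 6 / 6)) ∧ c = -(s * (Real.sqrt 6 / 6))) ∨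
       (c = s * (Real.sqrt 6 / 3) ∧ a = -(s * (Real.sqrt 6 / 6)) ∧ b = -(s * (Real.sqrt 6 / 6)))) := by
  set r := Real.sqrt 6 with hrdef
  have hr : r ^ 2 = 6 := Real.sq_sqrt (by norm_num)
  have hrpos : 0 < r := Real.sqrt_pos.mpr (by norm_num)
  have hs3 : (0:ℝ) < s ^ 3 := by positivity
  rw [div_eq_one_iff_eq (ne_of_gt hs3)]
  constructor
  · intro h
    have hc : c = -(a + b) := by linarith
    subst hc
    have h3 : r * (3 * (a * b * (-(a + b)))) = s ^ 3 := by linear_combination h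
    have hsq : 54 * (a * b * (-(a + b))) ^ 2 = (s ^ 2) ^ 3 := by
      linear_combination (3 * r * (a * b * (-(a + b))) + s ^ 3) * h3
        - 9 * (a * b * (-(a + b))) ^ 2 * hr
    have hX2 : ((a - b) * (b - -(a + b)) * (-(a + b) - a)) ^ 2 = 0 := by
      linear_combination (-(1/2 : ℝ)) * (s ^ 4 + s ^ 2 * (a ^ 2 + b ^ 2 + (-(a + b)) ^ 2)
        + (a ^ 2 + b ^ 2 + (-(a + b)) ^ 2) ^ 2) * hs - (1/2 : ℝ) * hsq
    have hX : (a - b) * (b - -(a + b)) * (-(a + b) - a) = 0 := sq_eq_zero_iff.mp hX2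
    rcases mul_eq_zero.mp hX with h12 | hf3
    · rcases mul_eq_zero.mp h12 with hf1 | hf2
      · have hb : b = a := by linarith
        subst hb
        obtain ⟨hx, hy⟩ := uniax_helper b (-(b + b)) s r hr hrpos hpos
          (by linear_combination hs) (by linear_combination h3) (by ring)
        exact Or.inr (Or.inr ⟨hy, hx, hx⟩)
      · have ha : a = -2 * b := by linarith
        subst ha
        obtain ⟨hx, hy⟩ := uniax_helper b (-2 * b) s r hr hrpos hpos
          (by linear_combination hs) (by linear_combination h3) rfl
        exact Or.inl ⟨hy, hx, by linear_combination hx⟩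
    · have hb : b = -2 * a := by linarith
      subst hb
      obtain ⟨hx, hy⟩ := uniax_helper a (-2 * a) s r hr hrpos hpos
        (by linear_combination hs) (by linear_combination h3) rfl
      exact Or.inr (Or.inl ⟨hy, hx, by linear_combination hx⟩)
  · rintro (⟨h1, h2, h3⟩ | ⟨h1, h2, h3⟩ | ⟨h1, h2, h3⟩) <;> subst h1 <;> subst h2 <;> subst h3 <;>
      linear_combination (s ^ 3 / 36) * (r ^ 2 + 6) * hr

/-- β(Q) = 1 iff the eigenvalues of Q/|Q| are √6/3 (simple) and -√6/6 (double). -/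
theorem biaxiality_eq_one_iff (Q : Matrix (Fin 3) (Fin 3) ℝ)
    (hQ : Q.IsHermitian) (htr : Q.trace = 0) (hne : Q ≠ 0) :
    Real.sqrt 6 * (Q * Q * Q).trace / (Real.sqrt (∑ k, ∑ l, (Q k l) ^ 2)) ^ 3 = 1 ↔
      ∃ i : Fin 3,
        hQ.eigenvalues i = Real.sqrt (∑ k, ∑ l, (Q k l) ^ 2) * (Real.sqrt 6 / 3) ∧
        ∀ j : Fin 3, j ≠ i →
          hQ.eigenvalues j = -(Real.sqrt (∑ k, ∑ l, (Q k l) ^ 2) * (Real.sqrt 6 / 6)) := by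
  set U : Matrix (Fin 3) (Fin 3) ℝ := (hQ.eigenvectorUnitary : Matrix (Fin 3) (Fin 3) ℝ)
    with hUdef
  set D : Matrix (Fin 3) (Fin 3) ℝ := diagonal (id ∘ hQ.eigenvalues) with hDdef
  have hUs : star U * U = 1 := mem_unitaryGroup_iff'.mp hQ.eigenvectorUnitary.2
  have spec : Q = U * D * star U := by
    have := hQ.spectral_theorem
    rwa [RCLike.ofReal_real_eq_id] at this
  have h1 : Q.trace = ∑ i, hQ.eigenvalues i := by
    conv_lhs => rw [spec]
    rw [Matrix.trace_mul_cycle, hUs, Matrix.one_mul, hDdef, trace_diagonal]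
    simp
  have hQ3 : Q * Q * Q = U * (D * D * D) * star U := by
    conv_lhs => rw [spec]
    simp only [Matrix.mul_assoc]
    rw [← Matrix.mul_assoc (star U) U, hUs, Matrix.one_mul,
        ← Matrix.mul_assoc (star U) U, hUs, Matrix.one_mul]
  have h3 : (Q * Q * Q).trace = ∑ i, hQ.eigenvalues i ^ 3 := by
    rw [hQ3, Matrix.trace_mul_cycle, hUs, Matrix.one_mul, hDdef,
        diagonal_mul_diagonal, diagonal_mul_diagonal, trace_diagonal]
    simp [pow_succ, mul_assoc]
  have h2 : ∑ k, ∑ l, (Q k l) ^ 2 = ∑ i, hQ.eigenvalues i ^ 2 := by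
    have e1 : (Q * Q).trace = ∑ i, hQ.eigenvalues i ^ 2 := by
      have hQ2 : Q * Q = U * (D * D) * star U := by
        conv_lhs => rw [spec]
        simp only [Matrix.mul_assoc]
        rw [← Matrix.mul_assoc (star U) U, hUs, Matrix.one_mul]
      rw [hQ2, Matrix.trace_mul_cycle, hUs, Matrix.one_mul, hDdef,
          diagonal_mul_diagonal, trace_diagonal]
      simp [sq]
    rw [← e1, Matrix.trace, Finset.sum_congr rfl]
    intro k _
    rw [Matrix.diag_apply, Matrix.mul_apply, Finset.sum_congr rfl]
    intro l _
    rw [sq]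
    have h := hQ.apply k l
    rw [star_trivial] at h
    rw [h]
  -- positivity of the Frobenius norm squared
  have hS0 : (0:ℝ) ≤ ∑ k, ∑ l, (Q k l) ^ 2 := by positivity
  have hSpos : (0:ℝ) < ∑ k, ∑ l, (Q k l) ^ 2 := by
    rcases hS0.lt_or_eq with h | h
    · exact h
    · exfalso; apply hne; ext k l
      have hk := (Finset.sum_eq_zero_iff_of_nonneg
        (fun k _ => Finset.sum_nonneg fun l _ => sq_nonneg (Q k l))).mp h.symm k
        (Finset.mem_univ k)
      have hl := (Finset.sum_eq_zero_iff_of_nonneg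
        (fun l _ => sq_nonneg (Q k l))).mp hk l (Finset.mem_univ l)
      simpa using sq_eq_zero_iff.mp hl
  set s : ℝ := Real.sqrt (∑ k, ∑ l, (Q k l) ^ 2) with hsdef
  have hspos : 0 < s := Real.sqrt_pos.mpr hSpos
  have hs2 : s ^ 2 = hQ.eigenvalues 0 ^ 2 + hQ.eigenvalues 1 ^ 2 + hQ.eigenvalues 2 ^ 2 := by
    rw [hsdef, Real.sq_sqrt hS0, h2, Fin.sum_univ_three]
  have h0 : hQ.eigenvalues 0 + hQ.eigenvalues 1 + hQ.eigenvalues 2 = 0 := by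
    rw [← Fin.sum_univ_three (fun i => hQ.eigenvalues i), ← h1, htr]
  have h3' : (Q * Q * Q).trace =
      hQ.eigenvalues 0 ^ 3 + hQ.eigenvalues 1 ^ 3 + hQ.eigenvalues 2 ^ 3 := by
    rw [h3, Fin.sum_univ_three]
  rw [h3']
  rw [key_alg (hQ.eigenvalues 0) (hQ.eigenvalues 1) (hQ.eigenvalues 2) s h0 hs2 hspos]
  constructor
  · rintro (⟨ha, hb, hc⟩ | ⟨ha, hb, hc⟩ | ⟨ha, hb, hc⟩)
    · exact ⟨0, ha, fun j hj => by
        fin_cases j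
        · exact absurd rfl hj
        · exact hb
        · exact hc⟩
    · exact ⟨1, ha, fun j hj => by
        fin_cases j
        · exact hb
        · exact absurd rfl hj
        · exact hc⟩
    · exact ⟨2, ha, fun j hj => by
        fin_cases j
        · exact hb
        · exact hc
        · exact absurd rfl hj⟩
  · rintro ⟨i, hi, hj⟩
    fin_cases i
    · exact Or.inl ⟨hi, hj 1 (by decide), hj 2 (by decide)⟩
    · exact Or.inr (Or.inl ⟨hi, hj 0 (by decide), hj 2 (by decide)⟩)
    · exact Or.inr (Or.inr ⟨hi, hj 0 (by decide), hj 1 (by decide)⟩)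
end

section
/- For a nonzero symmetric traceless 3×3 real matrix Q, β(Q) = -1 if and only if Q/|Q| has eigenvalues √6/6, √6/6, -√6/3 (two equal positive eigenvalues and one negative eigenvalue). -/
open Matrix

private lemma root_lemma (a x y z : ℝ) (h1 : x + y + z = 0)
    (h2 : x ^ 2 + y ^ 2 + z ^ 2 = 6 * a ^ 2) (hp3 : x ^ 3 + y ^ 3 + z ^ 3 = -(6 * a ^ 3)) :
    x = a ∨ x = -(2 * a) := by
  have e2fact : x * y + y * z + z * x = -(3 * a ^ 2) := by
    linear_combination ((x + y + z) / 2) * h1 - (1 / 2) * h2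
  have xyzfact : x * y * z = -(2 * a ^ 3) := by
    linear_combination (1 / 3) * hp3 - ((x ^ 2 + y ^ 2 + z ^ 2 - x * y - y * z - z * x) / 3) * h1
  have key : (x - a) ^ 2 * (x + 2 * a) = 0 := by
    linear_combination x ^ 2 * h1 - x * e2fact + xyzfact
  rcases mul_eq_zero.mp key with h | h
  · left; have := pow_eq_zero_iff (n := 2) (by norm_num) |>.mp h; linarith
  · right; linarith

/-- β(Q) = -1 iff the eigenvalues of Q/|Q| are √6/6 (double) and -√6/3 (simple). -/
theorem biaxiality_eq_neg_one_iff (Q : Matrix (Fin 3) (Fin 3) ℝ)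
    (hQ : Q.IsHermitian) (htr : Q.trace = 0) (hne : Q ≠ 0) :
    Real.sqrt 6 * (Q * Q * Q).trace / (Real.sqrt (∑ k, ∑ l, (Q k l) ^ 2)) ^ 3 = -1 ↔
      ∃ i : Fin 3,
        hQ.eigenvalues i = -(Real.sqrt (∑ k, ∑ l, (Q k l) ^ 2) * (Real.sqrt 6 / 3)) ∧
        ∀ j : Fin 3, j ≠ i →
          hQ.eigenvalues j = Real.sqrt (∑ k, ∑ l, (Q k l) ^ 2) * (Real.sqrt 6 / 6) := by
  -- notation
  set q : ℝ := Real.sqrt 6 with hqdef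
  have hq2 : q ^ 2 = 6 := Real.sq_sqrt (by norm_num)
  have hqpos : 0 < q := Real.sqrt_pos.mpr (by norm_num)
  set s : ℝ := Real.sqrt (∑ k, ∑ l, (Q k l) ^ 2) with hsdef
  -- traces via spectral theorem
  have hU := (Matrix.mem_unitaryGroup_iff').mp (hQ.eigenvectorUnitary).2
  have hspec := hQ.spectral_theorem
  rw [RCLike.ofReal_real_eq_id, Unitary.conjStarAlgAut_apply] at hspec
  set U : Matrix (Fin 3) (Fin 3) ℝ := (hQ.eigenvectorUnitary : Matrix (Fin 3) (Fin 3) ℝ) with hUdef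
  set D : Matrix (Fin 3) (Fin 3) ℝ := diagonal (id ∘ hQ.eigenvalues) with hDdef
  have key : ∀ X : Matrix (Fin 3) (Fin 3) ℝ, (U * X * star U).trace = X.trace := by
    intro X
    rw [Matrix.trace_mul_comm, ← Matrix.mul_assoc, hU, Matrix.one_mul]
  have h2m : Q * Q = U * (D * D) * star U := by
    rw [hspec]
    simp only [Matrix.mul_assoc]
    rw [← Matrix.mul_assoc (star U) U, hU, Matrix.one_mul]
  have h3m : Q * Q * Q = U * (D * D * D) * star U := by
    rw [h2m, hspec]
    simp only [Matrix.mul_assoc]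
    rw [← Matrix.mul_assoc (star U) U, hU, Matrix.one_mul]
  set x : ℝ := hQ.eigenvalues 0 with hx
  set y : ℝ := hQ.eigenvalues 1 with hy
  set z : ℝ := hQ.eigenvalues 2 with hz
  have htr3 : (Q * Q * Q).trace = x ^ 3 + y ^ 3 + z ^ 3 := by
    rw [h3m, key]
    simp [hDdef, Matrix.diagonal_mul_diagonal, Matrix.trace_diagonal, Fin.sum_univ_three]
    ring
  have htr2 : (Q * Q).trace = x ^ 2 + y ^ 2 + z ^ 2 := by
    rw [h2m, key]
    simp [hDdef, Matrix.diagonal_mul_diagonal, Matrix.trace_diagonal, Fin.sum_univ_three]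
    ring
  have htr1 : x + y + z = 0 := by
    have : Q.trace = x + y + z := by
      conv_lhs => rw [hspec, key]
      simp [hDdef, Matrix.trace_diagonal, Fin.sum_univ_three]
      rfl
    linarith [htr, this.symm.trans htr]
  -- the sum of squared entries equals trace (Q*Q)
  have hsum_tr : (∑ k, ∑ l, (Q k l) ^ 2) = (Q * Q).trace := by
    simp only [Matrix.trace, Matrix.diag, Matrix.mul_apply]
    refine Finset.sum_congr rfl fun i _ => Finset.sum_congr rfl fun j _ => ?_
    have := hQ.apply i j
    simp only [RCLike.star_def, starRingEnd_apply, star_trivial] at this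
    rw [sq, this]
  -- positivity of the sum
  have hsum_pos : 0 < ∑ k, ∑ l, (Q k l) ^ 2 := by
    obtain ⟨k, l, hkl⟩ : ∃ k l, Q k l ≠ 0 := by
      by_contra h
      push_neg at h
      exact hne (Matrix.ext fun i j => h i j)
    have : (0:ℝ) < (Q k l) ^ 2 := by positivity
    calc (0:ℝ) < (Q k l) ^ 2 := this
      _ ≤ ∑ l', (Q k l') ^ 2 :=
        Finset.single_le_sum (f := fun l' => (Q k l') ^ 2) (fun i _ => sq_nonneg _) (Finset.mem_univ l)
      _ ≤ ∑ k', ∑ l', (Q k' l') ^ 2 :=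
        Finset.single_le_sum (f := fun k' => ∑ l', (Q k' l') ^ 2)
          (fun i _ => Finset.sum_nonneg fun _ _ => sq_nonneg _) (Finset.mem_univ k)
  have hspos : 0 < s := Real.sqrt_pos.mpr hsum_pos
  have hs2 : s ^ 2 = x ^ 2 + y ^ 2 + z ^ 2 := by
    rw [hsdef, Real.sq_sqrt hsum_pos.le, hsum_tr, htr2]
  have hsne : s ≠ 0 := ne_of_gt hspos
  set a : ℝ := s * (q / 6) with hadef
  have hapos : 0 < a := by positivity
  have h6a2 : x ^ 2 + y ^ 2 + z ^ 2 = 6 * a ^ 2 := by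
    rw [← hs2, hadef]
    linear_combination (-(s ^ 2) / 6) * hq2
  have h2a : -(s * (q / 3)) = -(2 * a) := by rw [hadef]; ring
  constructor
  · intro hbeta
    rw [htr3] at hbeta
    have hp3 : x ^ 3 + y ^ 3 + z ^ 3 = -(6 * a ^ 3) := by
      have hb : q * (x ^ 3 + y ^ 3 + z ^ 3) = -(s ^ 3) := by
        rw [div_eq_iff (pow_ne_zero 3 hsne)] at hbeta
        linarith [hbeta]
      have : q * (x ^ 3 + y ^ 3 + z ^ 3) = q * (-(6 * a ^ 3)) := by
        rw [hb, hadef]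
        linear_combination ((s ^ 3 * (q ^ 2 + 6)) / 36) * hq2
      exact mul_left_cancel₀ (ne_of_gt hqpos) this
    have hxc := root_lemma a x y z htr1 h6a2 hp3
    have hyc := root_lemma a y z x (by linarith) (by linarith) (by linarith)
    have hzc := root_lemma a z x y (by linarith) (by linarith) (by linarith)
    rcases hxc with hX | hX <;> rcases hyc with hY | hY <;> rcases hzc with hZ | hZ
    · exfalso; rw [hX, hY, hZ] at htr1; linarith
    · refine ⟨2, ?_, fun j hj => ?_⟩
      · rw [← hz, hZ, h2a]
      · fin_cases j
        · show hQ.eigenvalues 0 = a; rw [← hx]; exact hX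
        · show hQ.eigenvalues 1 = a; rw [← hy]; exact hY
        · exact absurd rfl hj
    · refine ⟨1, ?_, fun j hj => ?_⟩
      · rw [← hy, hY, h2a]
      · fin_cases j
        · show hQ.eigenvalues 0 = a; rw [← hx]; exact hX
        · exact absurd rfl hj
        · show hQ.eigenvalues 2 = a; rw [← hz]; exact hZ
    · exfalso; rw [hX, hY, hZ] at htr1; linarith
    · refine ⟨0, ?_, fun j hj => ?_⟩
      · rw [← hx, hX, h2a]
      · fin_cases j
        · exact absurd rfl hj
        · show hQ.eigenvalues 1 = a; rw [← hy]; exact hY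
        · show hQ.eigenvalues 2 = a; rw [← hz]; exact hZ
    · exfalso; rw [hX, hY, hZ] at htr1; linarith
    · exfalso; rw [hX, hY, hZ] at htr1; linarith
    · exfalso; rw [hX, hY, hZ] at htr1; linarith
  · rintro ⟨i, hi, hrest⟩
    have hp3 : x ^ 3 + y ^ 3 + z ^ 3 = -(6 * a ^ 3) := by
      fin_cases i
      · have hx' : x = -(2 * a) := by
          rw [hx, ← h2a]; exact hi
        have hy' : y = a := by rw [hy]; exact hrest 1 (by decide)
        have hz' : z = a := by rw [hz]; exact hrest 2 (by decide)
        rw [hx', hy', hz']; ring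
      · have hy' : y = -(2 * a) := by
          rw [hy, ← h2a]; exact hi
        have hx' : x = a := by rw [hx]; exact hrest 0 (by decide)
        have hz' : z = a := by rw [hz]; exact hrest 2 (by decide)
        rw [hx', hy', hz']; ring
      · have hz' : z = -(2 * a) := by
          rw [hz, ← h2a]; exact hi
        have hx' : x = a := by rw [hx]; exact hrest 0 (by decide)
        have hy' : y = a := by rw [hy]; exact hrest 1 (by decide)
        rw [hx', hy', hz']; ring
    rw [htr3, hp3, hadef, div_eq_iff (pow_ne_zero 3 hsne)]
    linear_combination (-(s ^ 3 * (q ^ 2 + 6)) / 36) * hq2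
end

section
/- Let s, r, δ be real numbers satisfying s + r + δ = 0 and s² + r² + δ² + (√6/3)(s + r - 2δ) = 0 with δ ≥ 0 small and s ≥ 0 ≥ r. Then s = (3/2)^{1/4}√δ - δ/2 + O(δ^{3/2}) and r = -(3/2)^{1/4}√δ - δ/2 + O(δ^{3/2}); in particular there is a constant C > 0 such that |s - (3/2)^{1/4}√δ + δ/2| ≤ C δ^{3/2} for all sufficiently small δ ≥ 0. -/
set_option maxHeartbeats 1000000 in
/-- Asymptotics of s near the negative uniaxial state:
s = (3/2)^{1/4} √δ - δ/2 + O(δ^{3/2}). -/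
theorem s_asymptotics :
    ∃ C > (0 : ℝ), ∃ δ₀ > (0 : ℝ), ∀ s r δ : ℝ,
      s + r + δ = 0 →
      s ^ 2 + r ^ 2 + δ ^ 2 + (Real.sqrt 6 / 3) * (s + r - 2 * δ) = 0 →
      0 ≤ s → r ≤ 0 → 0 ≤ δ → δ ≤ δ₀ →
      |s - (3 / 2 : ℝ) ^ ((1 : ℝ) / 4) * Real.sqrt δ + δ / 2| ≤
        C * δ ^ ((3 : ℝ) / 2) ∧
      |r + (3 / 2 : ℝ) ^ ((1 : ℝ) / 4) * Real.sqrt δ + δ / 2| ≤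
        C * δ ^ ((3 : ℝ) / 2) := by
  refine ⟨1, one_pos, 1, one_pos, ?_⟩
  intro s r δ h1 h2 hs hr hδ hδ1
  have hA0 : (3 / 2 : ℝ) ^ ((1 : ℝ) / 4) = Real.sqrt (Real.sqrt (3/2)) := by
    rw [Real.sqrt_eq_rpow, Real.sqrt_eq_rpow,
      ← Real.rpow_mul (by norm_num : (0:ℝ) ≤ 3/2)]
    norm_num
  have h320 : δ ^ ((3:ℝ)/2) = δ * Real.sqrt δ := by
    rw [Real.sqrt_eq_rpow, show (3:ℝ)/2 = 1 + 1/2 by norm_num,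
      Real.rpow_add' hδ (by norm_num), Real.rpow_one]
  have h60 : Real.sqrt 6 = 2 * Real.sqrt (3/2) := by
    rw [show (6:ℝ) = (2:ℝ)^2 * (3/2) by norm_num, Real.sqrt_mul (by positivity),
      Real.sqrt_sq (by norm_num)]
  obtain ⟨u, hu⟩ : ∃ u, Real.sqrt δ = u := ⟨_, rfl⟩
  obtain ⟨t, ht⟩ : ∃ t, Real.sqrt (3/2 : ℝ) = t := ⟨_, rfl⟩
  obtain ⟨E, hE⟩ : ∃ E, Real.sqrt t = E := ⟨_, rfl⟩
  have hu0 : 0 ≤ u := hu ▸ Real.sqrt_nonneg δ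
  have hu2 : u ^ 2 = δ := hu ▸ Real.sq_sqrt hδ
  have ht0 : 0 ≤ t := ht ▸ Real.sqrt_nonneg _
  have ht2 : t ^ 2 = 3/2 := ht ▸ Real.sq_sqrt (by norm_num)
  have ht1 : 1 ≤ t := by nlinarith
  have h6 : Real.sqrt 6 = 2 * t := by rw [h60, ht]
  have hE0 : 0 ≤ E := hE ▸ Real.sqrt_nonneg _
  have hE2 : E ^ 2 = t := hE ▸ Real.sq_sqrt ht0
  have hE1 : 1 ≤ E := by nlinarith
  have hA : (3 / 2 : ℝ) ^ ((1 : ℝ) / 4) = E := by rw [hA0, ht, hE]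
  have h32 : δ ^ ((3:ℝ)/2) = δ * u := by rw [h320, hu]
  -- key equation
  have hr' : r = -s - δ := by linarith
  have key : (2*s + δ) ^ 2 = 2 * (2*t) * δ - 3 * δ^2 := by
    rw [h6] at h2
    nlinarith [h2, hr']
  have hD0 : 0 ≤ 2*s + δ := by linarith
  -- D ≤ 2 E u
  have hDle : 2*s + δ ≤ 2 * E * u := by
    have h' : (2*s + δ)^2 ≤ (2*E*u)^2 := by nlinarith
    calc 2*s + δ = Real.sqrt ((2*s + δ)^2) := (Real.sqrt_sq hD0).symm
      _ ≤ Real.sqrt ((2*E*u)^2) := Real.sqrt_le_sqrt h'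
      _ = 2*E*u := Real.sqrt_sq (by positivity)
  -- product identity
  have hprod : (2*E*u - (2*s+δ)) * (2*E*u + (2*s+δ)) = 3 * δ^2 := by
    linear_combination 4*u^2*hE2 + 4*t*hu2 - key
  -- lower bound : 2 E u - D ≤ 2 δ u
  have hlow : 2*E*u - (2*s+δ) ≤ 2 * (δ * u) := by
    rcases eq_or_lt_of_le hδ with hδ0 | hδ0
    · have hu' : u = 0 := by rw [← hu, ← hδ0, Real.sqrt_zero]
      have : (2*s + δ)^2 = 0 := by rw [key, ← hδ0]; ring
      have hD : 2*s + δ = 0 := by nlinarith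
      rw [hu', hD, ← hδ0]; norm_num
    · have hupos : 0 < u := by
        rw [← hu]; exact Real.sqrt_pos.mpr hδ0
      have hpos : 0 < 2*E*u + (2*s+δ) := by positivity
      have h3 : 3 * δ^2 ≤ 2 * (δ * u) * (2*E*u + (2*s+δ)) := by
        have e1 : 2*(δ*u)*(2*E*u + (2*s+δ)) = 4*E*δ^2 + 2*(δ*u)*(2*s+δ) := by
          linear_combination 4*E*δ*hu2
        nlinarith [e1, mul_nonneg (mul_nonneg hδ hu0) hD0,
          mul_nonneg (sub_nonneg.mpr hE1) (sq_nonneg δ)]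
      have := (mul_le_mul_iff_of_pos_right hpos).mp (by linarith [hprod, h3] :
        (2*E*u - (2*s+δ)) * (2*E*u + (2*s+δ)) ≤ 2 * (δ * u) * (2*E*u + (2*s+δ)))
      linarith
  have goal1 : |s - (3 / 2 : ℝ) ^ ((1 : ℝ) / 4) * Real.sqrt δ + δ / 2| ≤
      1 * δ ^ ((3 : ℝ) / 2) := by
    rw [hA, h32, one_mul, hu, abs_le]
    constructor
    · linarith
    · nlinarith [mul_nonneg hδ hu0]
  refine ⟨goal1, ?_⟩
  have heq : r + (3 / 2 : ℝ) ^ ((1 : ℝ) / 4) * Real.sqrt δ + δ / 2 =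
      -(s - (3 / 2 : ℝ) ^ ((1 : ℝ) / 4) * Real.sqrt δ + δ / 2) := by
    rw [hr']; ring
  rw [heq, abs_neg]
  exact goal1
end

section
/- Let Q be a symmetric traceless unit-norm 3×3 matrix with eigenvalues λ₁ = √6/6 + s, λ₂, λ₃ where λ₁ ≥ λ₂ ≥ λ₃, λ₁+λ₂+λ₃ = 0 and λ₁²+λ₂²+λ₃² = 1. Then β(Q) = -1 + 9s² + ζ(s) with |ζ(s)| ≤ C s³ for s small; in particular β(Q) = -1 + (9/2)|U|² + O(|U|³) where |U|² = 2s². -/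
/-- For eigenvalues λ₁ ≥ λ₂ ≥ λ₃ of a unit-norm traceless symmetric matrix,
with s = λ₁ - √6/6, one has β = -1 + 9 s² + ζ(s) with |ζ(s)| ≤ C s³;
equivalently β = -1 + (9/2)|U|² + O(|U|³) with |U|² = 2 s². -/
theorem biaxiality_expansion_near_neg_uniaxial :
    ∃ C > (0 : ℝ), ∃ s₀ > (0 : ℝ), ∀ l1 l2 l3 : ℝ,
      l1 ≥ l2 → l2 ≥ l3 →
      l1 + l2 + l3 = 0 → l1 ^ 2 + l2 ^ 2 + l3 ^ 2 = 1 →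
      l1 - Real.sqrt 6 / 6 ≤ s₀ →
      |Real.sqrt 6 * (l1 ^ 3 + l2 ^ 3 + l3 ^ 3) -
          (-1 + 9 * (l1 - Real.sqrt 6 / 6) ^ 2)| ≤
        C * (l1 - Real.sqrt 6 / 6) ^ 3 := by
  refine ⟨8, by norm_num, 1, by norm_num, ?_⟩
  intro l1 l2 l3 h12 h23 hsum hsq _
  set r : ℝ := Real.sqrt 6 with hrdef
  have hr2 : r ^ 2 = 6 := Real.sq_sqrt (by norm_num)
  have hr0 : 0 < r := Real.sqrt_pos.mpr (by norm_num)
  have hr3 : r ≤ 3 := by nlinarith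
  -- l1 ≥ r/6
  have hl1sq : 6 * l1 ^ 2 ≥ 1 := by nlinarith [sq_nonneg (l1 - l2), mul_nonneg (sub_nonneg.mpr h12) (by linarith : (0:ℝ) ≤ 2 * l1 + l2)]
  have hl1pos : 0 ≤ l1 := by nlinarith
  have hs : 0 ≤ l1 - r / 6 := by nlinarith
  have key : r * (l1 ^ 3 + l2 ^ 3 + l3 ^ 3) - (-1 + 9 * (l1 - r / 6) ^ 2)
      = 3 * r * (l1 - r / 6) ^ 3 := by
    linear_combination (r ^ 2 / 72 - 1 / 6 + (3 / 2) * l1 ^ 2 - (1 / 4) * l1 * r) * hr2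
      - (3 * r * l1 / 2) * hsq
      + r * (l1 ^ 2 + l2 ^ 2 + l3 ^ 2 - l1 * l2 - l2 * l3 - l1 * l3) * hsum + (3 / 2) * r * l1 * (l2 + l3 - l1) * hsum
  rw [key, abs_of_nonneg (by positivity)]
  nlinarith [pow_nonneg hs 3]
end

section
/- Let p₀ ∈ 𝕊² and V ∈ ℝ^{3×3}. Define Y := V - V(p₀⊗p₀) - (p₀⊗p₀)V + (V : p₀⊗p₀)(p₀⊗p₀) - ((V : (Id - p₀⊗p₀))/2)(Id - p₀⊗p₀), where A : B := Σᵢⱼ AᵢⱼBᵢⱼ. If V is symmetric, then Y is the orthogonal projection (with respect to the Frobenius inner product) of V onto the subspace 𝒰_{p₀} = {U symmetric, tr U = 0, U p₀ = 0}; in particular V : Q = Y : Q for every Q ∈ 𝒰_{p₀}, and Y ∈ 𝒰_{p₀}. -/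
open Matrix

/-- The explicit formula Y gives the Frobenius-orthogonal projection of a symmetric
matrix V onto 𝒰_{p₀} = {U symmetric, tr U = 0, U p₀ = 0}: Y lies in 𝒰_{p₀} and
V : Q = Y : Q for all Q ∈ 𝒰_{p₀}. -/
theorem projection_onto_Up (p₀ : Fin 3 → ℝ) (hp₀ : ∑ i, (p₀ i) ^ 2 = 1)
    (V : Matrix (Fin 3) (Fin 3) ℝ) (hV : V.IsSymm)
    (Y : Matrix (Fin 3) (Fin 3) ℝ)
    (hY : Y = V - V * vecMulVec p₀ p₀ - vecMulVec p₀ p₀ * V +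
        (∑ i, ∑ j, V i j * vecMulVec p₀ p₀ i j) • vecMulVec p₀ p₀ -
        ((∑ i, ∑ j, V i j * ((1 : Matrix (Fin 3) (Fin 3) ℝ) - vecMulVec p₀ p₀) i j) / 2) •
          ((1 : Matrix (Fin 3) (Fin 3) ℝ) - vecMulVec p₀ p₀)) :
    Y.IsSymm ∧ Y.trace = 0 ∧ Y.mulVec p₀ = 0 ∧
    ∀ Q : Matrix (Fin 3) (Fin 3) ℝ, Q.IsSymm → Q.trace = 0 → Q.mulVec p₀ = 0 →
      (∑ i, ∑ j, V i j * Q i j) = ∑ i, ∑ j, Y i j * Q i j := by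
  have hp : ∑ i, p₀ i * p₀ i = 1 := by simpa [sq] using hp₀
  set P : Matrix (Fin 3) (Fin 3) ℝ := vecMulVec p₀ p₀ with hPdef
  have hVsymm : Vᵀ = V := hV
  have hPsymm : Pᵀ = P := by
    ext i j; simp [hPdef, vecMulVec_apply, mul_comm]
  -- Frobenius inner product as a trace
  have frob : ∀ A B : Matrix (Fin 3) (Fin 3) ℝ,
      ∑ i, ∑ j, A i j * B i j = (Aᵀ * B).trace := by
    intro A B
    rw [trace]
    simp only [diag_apply, mul_apply, transpose_apply]
    rw [Finset.sum_comm]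
  have hPtrace : P.trace = 1 := by
    rw [trace]
    simpa [hPdef, vecMulVec_apply] using hp
  have hPp : P *ᵥ p₀ = p₀ := by
    ext i
    simp only [hPdef, mulVec, dotProduct, vecMulVec_apply]
    simp_rw [mul_assoc]
    rw [← Finset.mul_sum, hp, mul_one]
  -- abbreviations for the two scalar coefficients
  set c : ℝ := ∑ i, ∑ j, V i j * P i j with hcdef
  set d : ℝ := (∑ i, ∑ j, V i j * ((1 : Matrix (Fin 3) (Fin 3) ℝ) - P) i j) / 2 with hddef
  have hc : c = (V * P).trace := by rw [hcdef, frob, hVsymm]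
  have hd : d = (V.trace - (V * P).trace) / 2 := by
    rw [hddef, frob, hVsymm, mul_sub, mul_one, trace_sub]
  -- symmetry of Y
  have hYsymm : Yᵀ = Y := by
    rw [hY]
    simp only [transpose_sub, transpose_add, transpose_smul, transpose_mul, transpose_one,
      hPsymm, hVsymm]
    abel
  refine ⟨hYsymm, ?_, ?_, ?_⟩
  · -- trace
    rw [hY]
    simp only [trace_sub, trace_add, trace_smul, smul_eq_mul, trace_one, hPtrace,
      trace_mul_comm P V]
    rw [hc, hd]
    simp only [Fintype.card_fin, Nat.cast_ofNat]
    ring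
  · -- mulVec
    have hVPp : (V * P) *ᵥ p₀ = V *ᵥ p₀ := by rw [← mulVec_mulVec, hPp]
    have hPVp : (P * V) *ᵥ p₀ = c • p₀ := by
      rw [← mulVec_mulVec, hcdef]
      ext i
      simp only [hPdef, mulVec, dotProduct, vecMulVec_apply, Pi.smul_apply, smul_eq_mul]
      simp_rw [Finset.mul_sum, Finset.sum_mul]
      exact Finset.sum_congr rfl fun a _ => Finset.sum_congr rfl fun b _ => by ring
    rw [hY]
    simp only [sub_mulVec, add_mulVec, smul_mulVec, one_mulVec, hVPp, hPVp, hPp,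
      ← hcdef, ← hddef]
    ext i
    simp
  · -- inner products agree
    intro Q hQs hQt hQp
    have hQsymm : Qᵀ = Q := hQs
    have hQP : Q * P = 0 := by
      ext i j
      have h0 : ∑ k, Q i k * p₀ k = 0 := by
        simpa [mulVec, dotProduct] using congrFun hQp i
      simp only [hPdef, mul_apply, vecMulVec_apply, Matrix.zero_apply]
      simp_rw [← mul_assoc]
      rw [← Finset.sum_mul, h0, zero_mul]
    have hPQ : P * Q = 0 := by
      ext i j
      have h0 : ∑ k, Q j k * p₀ k = 0 := by
        simpa [mulVec, dotProduct] using congrFun hQp j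
      simp only [hPdef, mul_apply, vecMulVec_apply, Matrix.zero_apply]
      have : ∀ k, p₀ i * p₀ k * Q k j = p₀ i * (Q j k * p₀ k) := by
        intro k
        have := congrFun (congrFun hQsymm k) j
        simp only [transpose_apply] at this
        rw [← this]; ring
      simp_rw [this]
      rw [← Finset.mul_sum, h0, mul_zero]
    have htPQ : (P * Q).trace = 0 := by rw [hPQ]; simp
    rw [frob, frob, hVsymm, hYsymm, hY]
    simp only [sub_mul, add_mul, smul_mul_assoc, one_mul, trace_sub, trace_add, trace_smul,
      smul_eq_mul, mul_assoc, hQP, hPQ, mul_zero, trace_zero]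
    rw [trace_mul_comm P (V * Q), mul_assoc, hQP, mul_zero, trace_zero, hQt]
    ring
end
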